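/- Small Model Theorem for rational logic R: if a finite set Γ of formulas (boolean combinations of propositional formulas and conditional assertions A |~ B) is satisfiable in a rational model, then it is satisfiable in a rational model with at most n worlds, where n is the size of Γ (the number of conditional subformula occurrences in Γ plus one suffices). -/

import Mathlib

/-- Propositional formulas over atoms `α`. -/
inductive PForm (α : Type) : Type
  | atom : α → PForm α
  | neg : PForm α → PForm α
  | conj : PForm α → PForm α → PForm α
  | disj : PForm α → PForm α → PForm α

/-- Truth of a propositional formula at a world, given a valuation. -/
def PForm.sat {α W : Type} (V : W → α → Prop) : W → PForm α → Prop
  | w, .atom a => V w a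
  | w, .neg A => ¬ PForm.sat V w A
  | w, .conj A B => PForm.sat V w A ∧ PForm.sat V w B
  | w, .disj A B => PForm.sat V w A ∨ PForm.sat V w B

/-- `minW lt S w` : `w` is a `lt`-minimal world satisfying `S`. -/
def minW {W : Type} (lt : W → W → Prop) (S : W → Prop) (w : W) : Prop :=
  S w ∧ ∀ w', lt w' w → ¬ S w'

/-- The language of KLM logic R: boolean combinations of propositional formulas
and conditional assertions `A |~ B`. -/
inductive CForm (α : Type) : Type
  | prop : PForm α → CForm α
  | cond : PForm α → PForm α → CForm α
  | neg : CForm α → CForm α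
  | conj : CForm α → CForm α → CForm α
  | disj : CForm α → CForm α → CForm α

/-- A rational model: `<` irreflexive, transitive, modular, smooth. -/
structure RatModel (α : Type) where
  W : Type
  lt : W → W → Prop
  V : W → α → Prop
  nonempty : Nonempty W
  irrefl : Irreflexive lt
  trans : Transitive lt
  modular : ∀ w w₁ w₂, lt w₁ w₂ → lt w₁ w ∨ lt w w₂
  smooth : ∀ (A : PForm α) (w : W), PForm.sat V w A →
      minW lt (fun v => PForm.sat V v A) w ∨
        ∃ w', minW lt (fun v => PForm.sat V v A) w' ∧ lt w' w

/-- Truth of a formula of the language at a world of a rational model. -/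
def csat {α : Type} (M : RatModel α) : M.W → CForm α → Prop
  | w, .prop A => PForm.sat M.V w A
  | _, .cond A B => ∀ v, minW M.lt (fun u => PForm.sat M.V u A) v → PForm.sat M.V v B
  | w, .neg F => ¬ csat M w F
  | w, .conj F G => csat M w F ∧ csat M w G
  | w, .disj F G => csat M w F ∨ csat M w G

/-- Number of conditional subformula occurrences. -/
def condCount {α : Type} : CForm α → ℕ
  | .prop _ => 0
  | .cond _ _ => 1
  | .neg F => condCount F
  | .conj F G => condCount F + condCount G
  | .disj F G => condCount F + condCount G

/-- List of conditional subformula occurrences of a formula. -/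
def condsOf {α : Type} : CForm α → List (PForm α × PForm α)
  | .prop _ => []
  | .cond A B => [(A, B)]
  | .neg F => condsOf F
  | .conj F G => condsOf F ++ condsOf G
  | .disj F G => condsOf F ++ condsOf G

/-- All conditional occurrences in a list of formulas. -/
def condsAll {α : Type} : List (CForm α) → List (PForm α × PForm α)
  | [] => []
  | F :: rest => condsOf F ++ condsAll rest

lemma condsOf_length {α : Type} (F : CForm α) : (condsOf F).length = condCount F := by
  induction F <;> simp [condsOf, condCount, *]

lemma condsAll_length {α : Type} (Γ : List (CForm α)) :
    (condsAll Γ).length = (Γ.map condCount).sum := by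
  induction Γ with
  | nil => rfl
  | cons F rest ih => simp [condsAll, condsOf_length, ih]

lemma mem_condsAll {α : Type} {Γ : List (CForm α)} {F : CForm α}
    {p : PForm α × PForm α} (hF : F ∈ Γ) (hp : p ∈ condsOf F) : p ∈ condsAll Γ := by
  induction Γ with
  | nil => cases hF
  | cons G rest ih =>
    rcases List.mem_cons.mp hF with hF | hF
    · exact List.mem_append_left _ (hF ▸ hp)
    · exact List.mem_append_right _ (ih hF)

lemma sat_subtype {α W : Type} (V : W → α → Prop) (P : W → Prop)
    (v : {x // P x}) (A : PForm α) :
    PForm.sat (fun (x : {x // P x}) a => V x.1 a) v A ↔ PForm.sat V v.1 A := by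
  induction A with
  | atom a => exact Iff.rfl
  | neg A ih => simp [PForm.sat, ih]
  | conj A B ihA ihB => simp [PForm.sat, ihA, ihB]
  | disj A B ihA ihB => simp [PForm.sat, ihA, ihB]

/-- Small Model Theorem for R: a finite satisfiable set Γ is
satisfiable in a rational model with at most (number of conditional
occurrences in Γ) + 1 worlds. -/
theorem small_model_theorem {α : Type} (Γ : List (CForm α))
    (hsat : ∃ (M : RatModel α) (w : M.W), ∀ F ∈ Γ, csat M w F) :
    ∃ M : RatModel α, Finite M.W ∧
      Nat.card M.W ≤ 1 + (Γ.map condCount).sum ∧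
      ∃ w : M.W, ∀ F ∈ Γ, csat M w F := by
  classical
  obtain ⟨M, w, hw⟩ := hsat
  let wit : PForm α × PForm α → M.W := fun p =>
    if h : ∃ v, minW M.lt (fun u => PForm.sat M.V u p.1) v ∧ ¬ PForm.sat M.V v p.2 then
      h.choose
    else if h2 : ∃ v, minW M.lt (fun u => PForm.sat M.V u p.1) v then h2.choose
    else w
  let L : List M.W := w :: (condsAll Γ).map wit
  have hwL : w ∈ L := List.mem_cons_self
  have hwitL : ∀ p ∈ condsAll Γ, wit p ∈ L := fun p hp =>
    List.mem_cons_of_mem _ (List.mem_map_of_mem hp)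
  -- the small world type
  have hsurj : Function.Surjective
      (fun i : Fin L.length => (⟨L.get i, L.get_mem _⟩ : {x : M.W // x ∈ L})) := by
    intro x
    obtain ⟨i, hi⟩ := List.mem_iff_get.mp x.2
    exact ⟨i, Subtype.ext hi⟩
  have hfin : Finite {x : M.W // x ∈ L} := Finite.of_surjective _ hsurj
  have hirr : Irreflexive (fun a b : {x : M.W // x ∈ L} => M.lt a.1 b.1) :=
    fun a => M.irrefl a.1
  have htr : Transitive (fun a b : {x : M.W // x ∈ L} => M.lt a.1 b.1) :=
    fun _ _ _ hab hbc => M.trans hab hbc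
  have hwf : WellFounded (fun a b : {x : M.W // x ∈ L} => M.lt a.1 b.1) := by
    have h1 : IsTrans {x : M.W // x ∈ L} (fun a b => M.lt a.1 b.1) := ⟨htr⟩
    have h2 : IsIrrefl {x : M.W // x ∈ L} (fun a b => M.lt a.1 b.1) := ⟨hirr⟩
    exact Finite.wellFounded_of_trans_of_irrefl _
  have hsmooth : ∀ (A : PForm α) (a : {x : M.W // x ∈ L}),
      PForm.sat (fun x b => M.V x.1 b) a A →
      minW (fun u v : {x : M.W // x ∈ L} => M.lt u.1 v.1)
          (fun v => PForm.sat (fun x b => M.V x.1 b) v A) a ∨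
        ∃ m, minW (fun u v : {x : M.W // x ∈ L} => M.lt u.1 v.1)
          (fun v => PForm.sat (fun x b => M.V x.1 b) v A) m ∧ M.lt m.1 a.1 := by
    intro A a ha
    obtain ⟨m, hmT, hmin⟩ := hwf.has_min
      {x | PForm.sat (fun x b => M.V x.1 b) x A ∧ (M.lt x.1 a.1 ∨ x = a)} ⟨a, ha, Or.inr rfl⟩
    obtain ⟨hmP, hm⟩ := hmT
    have hminW : minW (fun u v : {x : M.W // x ∈ L} => M.lt u.1 v.1)
        (fun v => PForm.sat (fun x b => M.V x.1 b) v A) m := by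
      refine ⟨hmP, fun x hx hPx => hmin x ⟨hPx, ?_⟩ hx⟩
      rcases hm with h | h
      · exact Or.inl (M.trans hx h)
      · exact Or.inl (h ▸ hx)
    rcases hm with h | h
    · exact Or.inr ⟨m, hminW, h⟩
    · exact Or.inl (h ▸ hminW)
  let M' : RatModel α :=
    { W := {x : M.W // x ∈ L}
      lt := fun a b => M.lt a.1 b.1
      V := fun x b => M.V x.1 b
      nonempty := ⟨⟨w, hwL⟩⟩
      irrefl := hirr
      trans := htr
      modular := fun u u1 u2 h => M.modular u.1 u1.1 u2.1 h
      smooth := hsmooth }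
  have satT : ∀ (A : PForm α) (v : {x : M.W // x ∈ L}),
      PForm.sat (fun x b => M.V x.1 b) v A ↔ PForm.sat M.V v.1 A :=
    fun A v => sat_subtype M.V _ v A
  have condIff : ∀ A B : PForm α, (A, B) ∈ condsAll Γ →
      ((∀ v : {x : M.W // x ∈ L},
          minW (fun u v : {x : M.W // x ∈ L} => M.lt u.1 v.1)
            (fun u => PForm.sat (fun x b => M.V x.1 b) u A) v →
          PForm.sat (fun x b => M.V x.1 b) v B)
        ↔ (∀ v, minW M.lt (fun u => PForm.sat M.V u A) v → PForm.sat M.V v B)) := by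
    intro A B hmem
    constructor
    · intro hs v hv
      by_contra hB
      have hex : ∃ u, minW M.lt (fun u => PForm.sat M.V u A) u ∧ ¬ PForm.sat M.V u B :=
        ⟨v, hv, hB⟩
      have hwit : wit (A, B) = hex.choose := by
        simp only [wit, dif_pos hex]
      obtain ⟨hu1, hu2⟩ := hex.choose_spec
      have huL : hex.choose ∈ L := hwit ▸ hwitL _ hmem
      have humin : minW (fun u v : {x : M.W // x ∈ L} => M.lt u.1 v.1)
          (fun u => PForm.sat (fun x b => M.V x.1 b) u A) ⟨hex.choose, huL⟩ :=
        ⟨(satT A _).mpr hu1.1, fun x hx hax => hu1.2 x.1 hx ((satT A x).mp hax)⟩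
      exact hu2 ((satT B _).mp (hs ⟨hex.choose, huL⟩ humin))
    · intro hb v hv
      have hvA : PForm.sat M.V v.1 A := (satT A v).mp hv.1
      rcases M.smooth A v.1 hvA with hm | ⟨m, hm, hlt⟩
      · exact (satT B v).mpr (hb _ hm)
      · exfalso
        have hnoneg : ¬ ∃ u, minW M.lt (fun u => PForm.sat M.V u A) u ∧
            ¬ PForm.sat M.V u B := by
          rintro ⟨u, hu, hB⟩; exact hB (hb u hu)
        have hex2 : ∃ u, minW M.lt (fun u => PForm.sat M.V u A) u := ⟨m, hm⟩
        have hwit : wit (A, B) = hex2.choose := by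
          simp only [wit, dif_neg hnoneg, dif_pos hex2]
        have hu := hex2.choose_spec
        have huL : hex2.choose ∈ L := hwit ▸ hwitL _ hmem
        have hultv : M.lt hex2.choose v.1 := by
          rcases M.modular hex2.choose m v.1 hlt with h | h
          · exact absurd hm.1 (hu.2 m h)
          · exact h
        exact hv.2 ⟨hex2.choose, huL⟩ hultv ((satT A _).mpr hu.1)
  have transF : ∀ F : CForm α, (∀ p ∈ condsOf F, p ∈ condsAll Γ) →
      ∀ v : {x : M.W // x ∈ L}, (csat M' v F ↔ csat M v.1 F) := by
    intro F
    induction F with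
    | prop A => intro _ v; exact satT A v
    | cond A B =>
      intro h v
      exact condIff A B (h _ (by simp [condsOf]))
    | neg F ih =>
      intro h v
      simp only [csat]
      exact not_congr (ih h v)
    | conj F G ihF ihG =>
      intro h v
      simp only [csat]
      exact and_congr (ihF (fun p hp => h p (by simp [condsOf, hp])) v)
        (ihG (fun p hp => h p (by simp [condsOf, hp])) v)
    | disj F G ihF ihG =>
      intro h v
      simp only [csat]
      exact or_congr (ihF (fun p hp => h p (by simp [condsOf, hp])) v)
        (ihG (fun p hp => h p (by simp [condsOf, hp])) v)
  refine ⟨M', hfin, ?_, ⟨w, hwL⟩, ?_⟩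
  · have h1 : Nat.card {x : M.W // x ∈ L} ≤ Nat.card (Fin L.length) :=
      Nat.card_le_card_of_surjective _ hsurj
    have h2 : L.length = 1 + (Γ.map condCount).sum := by
      simp [L, condsAll_length, Nat.add_comm]
    simpa [h2] using h1
  · intro F hF
    exact (transF F (fun p hp => mem_condsAll hF hp) ⟨w, hwL⟩).mpr (hw F hF)
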